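/- For every real number s and every real w > 0, the value w·C(s/w) is the greatest element of the set { s·ζ − w·(4·cosh(ζ/2) − 4) : ζ ∈ ℝ }; in particular sup_{ζ∈ℝ} { s·ζ − w·C*(ζ) } = w·C(s/w). -/

import Mathlib

/-- The Legendre conjugate of `C*(σ) = 4 cosh(σ/2) - 4`. -/
noncomputable def Cfun (s : ℝ) : ℝ :=
  2 * s * Real.arsinh (s / 2) - 2 * Real.sqrt (s ^ 2 + 4) + 4

/-- Tangent line of `cosh` lies below: `cosh y + sinh y (x - y) ≤ cosh x`. -/
lemma cosh_tangent_le (x y : ℝ) :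
    Real.cosh y + Real.sinh y * (x - y) ≤ Real.cosh x := by
  have h1 : (x - y + 1) * Real.exp y ≤ Real.exp x := by
    have h := Real.add_one_le_exp (x - y)
    have := mul_le_mul_of_nonneg_right h (Real.exp_pos y).le
    rwa [← Real.exp_add, sub_add_cancel] at this
  have h2 : (y - x + 1) * Real.exp (-y) ≤ Real.exp (-x) := by
    have h := Real.add_one_le_exp (y - x)
    have := mul_le_mul_of_nonneg_right h (Real.exp_pos (-y)).le
    rwa [← Real.exp_add, show y - x + -y = -x from by ring] at this
  rw [Real.cosh_eq, Real.sinh_eq, Real.cosh_eq]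
  nlinarith [h1, h2]

theorem perspective_as_sup (s w : ℝ) (hw : 0 < w) :
    IsGreatest {y : ℝ | ∃ ζ : ℝ, y = s * ζ - w * (4 * Real.cosh (ζ / 2) - 4)}
      (w * Cfun (s / w)) := by
  set t : ℝ := s / w with ht
  have hst : s = t * w := by rw [ht]; field_simp [hw.ne']
  set ζ0 : ℝ := 2 * Real.arsinh (t / 2) with hζ0
  have hcosh : Real.cosh (ζ0 / 2) = Real.sqrt (1 + (t / 2) ^ 2) := by
    rw [hζ0]
    rw [show 2 * Real.arsinh (t / 2) / 2 = Real.arsinh (t / 2) by ring]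
    exact Real.cosh_arsinh _
  have hsinh : Real.sinh (ζ0 / 2) = t / 2 := by
    rw [hζ0]
    rw [show 2 * Real.arsinh (t / 2) / 2 = Real.arsinh (t / 2) by ring]
    exact Real.sinh_arsinh _
  have hsqrt : Real.sqrt (t ^ 2 + 4) = 2 * Real.sqrt (1 + (t / 2) ^ 2) := by
    rw [show t ^ 2 + 4 = 2 ^ 2 * (1 + (t / 2) ^ 2) by ring]
    rw [Real.sqrt_mul (by positivity), Real.sqrt_sq (by norm_num)]
  have key : s * ζ0 - w * (4 * Real.cosh (ζ0 / 2) - 4) = w * Cfun t := by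
    rw [hcosh, Cfun, hsqrt, hζ0, hst]
    ring
  constructor
  · exact ⟨ζ0, key.symm⟩
  · rintro y ⟨ζ, rfl⟩
    rw [← key]
    have := cosh_tangent_le (ζ / 2) (ζ0 / 2)
    rw [hsinh] at this
    rw [hst]
    nlinarith [mul_le_mul_of_nonneg_left this hw.le]
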